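/- arXiv:1105.5961 — 4 statements merged into one kernel-verified Lean document; each statement's English description precedes it below -/
import Mathlib

section
/- Let (G,μ) be a countable measured groupoid with measure ν on G and Radon–Nikodym derivative δ = dν⁻¹/dν. If g is a Borel function on G such that f = δ^{-1/2} g belongs to I(G), then the right convolution operator ξ ↦ ξ*g is bounded on L²(G,ν) with norm at most ‖f‖_I. -/
open MeasureTheory ENNReal Filter Topology
open scoped ComplexOrder
open scoped NNReal

/-- A discrete (countable) groupoid, given algebraically: a type `E` of arrows over a
unit space `X`, with range `r`, source `s`, a (total) partial multiplication `mul`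
(only constrained on composable pairs), inversion, and countable source fibres. -/
structure CountableGroupoid where
  E : Type
  X : Type
  r : E → X
  s : E → X
  unit : X → E
  mul : E → E → E
  inv : E → E
  r_unit : ∀ x, r (unit x) = x
  s_unit : ∀ x, s (unit x) = x
  mul_assoc' : ∀ a b c, s a = r b → s b = r c → mul (mul a b) c = mul a (mul b c)
  r_mul : ∀ a b, s a = r b → r (mul a b) = r a
  s_mul : ∀ a b, s a = r b → s (mul a b) = s b
  unit_mul : ∀ a, mul (unit (r a)) a = a
  mul_unit : ∀ a, mul a (unit (s a)) = a
  r_inv : ∀ a, r (inv a) = s a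
  s_inv : ∀ a, s (inv a) = r a
  mul_inv : ∀ a, mul a (inv a) = unit (r a)
  inv_mul : ∀ a, mul (inv a) a = unit (s a)
  countable_fibers : ∀ x, {γ : E | s γ = x}.Countable

namespace CountableGroupoid

variable (G : CountableGroupoid)

/-- Sum of a nonnegative function over the source fibre `G_x = s⁻¹(x)`. -/
noncomputable def sFiberSum (f : G.E → ℝ≥0∞) (x : G.X) : ℝ≥0∞ :=
  ∑' γ : {γ : G.E // G.s γ = x}, f γ.1

/-- Sum of a nonnegative function over the range fibre `G^x = r⁻¹(x)`. -/
noncomputable def rFiberSum (f : G.E → ℝ≥0∞) (x : G.X) : ℝ≥0∞ :=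
  ∑' γ : {γ : G.E // G.r γ = x}, f γ.1

/-- The `I`-norm : `max (ess sup_x Σ_{r γ = x} |f γ|, ess sup_x Σ_{s γ = x} |f γ|)`. -/
noncomputable def Inorm [MeasurableSpace G.X] (μ : Measure G.X) (f : G.E → ℂ) : ℝ≥0∞ :=
  max (essSup (fun x => G.rFiberSum (fun γ => (‖f γ‖₊ : ℝ≥0∞)) x) μ)
      (essSup (fun x => G.sFiberSum (fun γ => (‖f γ‖₊ : ℝ≥0∞)) x) μ)

/-- The factorizations `γ = γ₁ γ₂` of an arrow `γ`. -/
def Factorizations (γ : G.E) : Type :=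
  {p : G.E × G.E // G.s p.1 = G.r p.2 ∧ G.mul p.1 p.2 = γ}

/-- Convolution product `(f*g)(γ) = Σ_{γ₁γ₂ = γ} f(γ₁) g(γ₂)`. -/
noncomputable def conv (f g : G.E → ℂ) (γ : G.E) : ℂ :=
  ∑' p : G.Factorizations γ, f p.1.1 * g p.1.2

/-- Involution `f^*(γ) = conj (f (γ⁻¹))`. -/
noncomputable def starF (f : G.E → ℂ) (γ : G.E) : ℂ := (starRingEnd ℂ) (f (G.inv γ))

/-- The measure `ν` on `G` induced by `μ`: `ν(A) = ∫_X #(A ∩ s⁻¹ x) dμ(x)`. -/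
noncomputable def nuSet [MeasurableSpace G.X] (μ : Measure G.X) (A : Set G.E) : ℝ≥0∞ :=
  ∫⁻ x, (∑' _γ : ↥(A ∩ {γ : G.E | G.s γ = x}), (1 : ℝ≥0∞)) ∂μ

/-- Positive definiteness of a function on a groupoid. -/
def IsPosDef (F : G.E → ℂ) : Prop :=
  ∀ (x : G.X) (n : ℕ) (γ : Fin n → G.E), (∀ i, G.r (γ i) = x) →
    ∀ lam : Fin n → ℂ,
      0 ≤ ∑ i, ∑ j, lam i * (starRingEnd ℂ) (lam j) * F (G.mul (G.inv (γ i)) (γ j))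

/-- Real conditionally negative definite functions on a groupoid. -/
def IsCondNegDef (ψ : G.E → ℝ) : Prop :=
  (∀ x, ψ (G.unit x) = 0) ∧ (∀ γ, ψ (G.inv γ) = ψ γ) ∧
  (∀ (x : G.X) (n : ℕ) (γ : Fin n → G.E), (∀ i, G.r (γ i) = x) →
    ∀ lam : Fin n → ℝ, (∑ i, lam i) = 0 →
      (∑ i, ∑ j, lam i * lam j * ψ (G.mul (G.inv (γ i)) (γ j))) ≤ 0)

/-- `Q^n` : products of `n` elements of `Q` (with `Q^0` the units). -/
def Qpow (Q : Set G.E) : ℕ → Set G.E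
  | 0 => Set.range G.unit
  | n+1 => {γ : G.E | ∃ a ∈ Q, ∃ b ∈ Qpow Q n, G.s a = G.r b ∧ γ = G.mul a b}

/-- A reduced composable chain of elements of `Q` (no backtracking). -/
def IsReducedChain (Q : Set G.E) : List G.E → Prop
  | [] => True
  | [a] => a ∈ Q
  | a :: b :: l => a ∈ Q ∧ G.s a = G.r b ∧ b ≠ G.inv a ∧ IsReducedChain Q (b :: l)

/-- A treeing: a symmetric generating set disjoint from the units such that each fibre
graph is a tree (no nontrivial reduced loops). -/
def IsTreeing (Q : Set G.E) : Prop :=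
  (∀ γ ∈ Q, G.inv γ ∈ Q) ∧
  (∀ x, G.unit x ∉ Q) ∧
  (∀ γ : G.E, ∃ n, γ ∈ G.Qpow Q n) ∧
  (∀ (a : G.E) (l : List G.E), G.IsReducedChain Q (a :: l) →
      List.foldl G.mul a l ≠ G.unit (G.r a))

/-- The length function `ψ(γ) = d_{r γ}(r γ, γ) = min {n | γ ∈ Q^n}`. -/
noncomputable def treeDist (Q : Set G.E) (γ : G.E) : ℝ :=
  ((sInf {n : ℕ | γ ∈ G.Qpow Q n} : ℕ) : ℝ)

/-- The `A = L^∞(X)`-valued inner product `⟨ξ,η⟩_A(x) = Σ_{s γ = x} conj (ξ γ) η γ`. -/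
noncomputable def innerA (ξ η : G.E → ℂ) (x : G.X) : ℂ :=
  ∑' γ : {γ : G.E // G.s γ = x}, (starRingEnd ℂ) (ξ γ.1) * η γ.1

/-- The Haagerup property for a countable measured groupoid. -/
def HaagerupProperty [MeasurableSpace G.X] (μ : Measure G.X) : Prop :=
  ∃ F : ℕ → G.E → ℂ,
    (∀ n, G.IsPosDef (F n)) ∧
    (∀ n, ∀ᵐ x ∂μ, F n (G.unit x) = 1) ∧
    (∀ n, ∀ ε : ℝ, 0 < ε → G.nuSet μ {γ : G.E | ε < ‖F n γ‖} < ⊤) ∧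
    G.nuSet μ {γ : G.E | ¬ Tendsto (fun n => F n γ) atTop (nhds (1 : ℂ))} = 0

end CountableGroupoid


lemma ennreal_two_mul_le (a b : ℝ≥0∞) : a * b + a * b ≤ a ^ 2 + b ^ 2 := by
  rcases eq_or_ne a ⊤ with ha | ha
  · rcases eq_or_ne b 0 with hb | hb
    · simp [ha, hb]
    · have : a ^ 2 = ⊤ := by simp [ha]
      simp [this]
  rcases eq_or_ne b ⊤ with hb | hb
  · rcases eq_or_ne a 0 with ha0 | ha0
    · simp [hb, ha0]
    · have : b ^ 2 = ⊤ := by simp [hb]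
      simp [this]
  lift a to ℝ≥0 using ha
  lift b to ℝ≥0 using hb
  rw [← ENNReal.coe_mul, ← ENNReal.coe_add, ← ENNReal.coe_pow, ← ENNReal.coe_pow,
    ← ENNReal.coe_add, ENNReal.coe_le_coe, ← NNReal.coe_le_coe]
  push_cast
  nlinarith [sq_nonneg ((a : ℝ) - (b : ℝ))]

lemma ennreal_tsum_cs {ι : Type} (w a : ι → ℝ≥0∞) :
    (∑' i, w i * a i) ^ 2 ≤ (∑' i, w i * a i ^ 2) * (∑' i, w i) := by
  have expand : ∀ u v : ι → ℝ≥0∞, (∑' i, u i) * (∑' j, v j) = ∑' i, ∑' j, u i * v j := by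
    intro u v
    rw [← ENNReal.tsum_mul_right]
    exact tsum_congr fun i => ENNReal.tsum_mul_left.symm
  have key : ∀ i j : ι, (w i * a i) * (w j * a j) + (w i * a i) * (w j * a j)
      ≤ (w i * a i ^ 2) * w j + (w i) * (w j * a j ^ 2) := by
    intro i j
    have h := ennreal_two_mul_le (a i) (a j)
    calc (w i * a i) * (w j * a j) + (w i * a i) * (w j * a j)
        = w i * w j * (a i * a j + a i * a j) := by ring
      _ ≤ w i * w j * (a i ^ 2 + a j ^ 2) := mul_le_mul_right h _
      _ = (w i * a i ^ 2) * w j + (w i) * (w j * a j ^ 2) := by ring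
  rw [sq]
  have h4 : (∑' i, w i * a i) * (∑' i, w i * a i) + (∑' i, w i * a i) * (∑' i, w i * a i)
      ≤ (∑' i, w i * a i ^ 2) * (∑' i, w i) + (∑' i, w i * a i ^ 2) * (∑' i, w i) := by
    nth_rewrite 4 [mul_comm]
    rw [expand, expand, expand, ← ENNReal.tsum_add, ← ENNReal.tsum_add]
    simp_rw [← ENNReal.tsum_add]
    exact ENNReal.tsum_le_tsum fun i => ENNReal.tsum_le_tsum fun j => key i j
  rw [← two_mul, ← two_mul] at h4
  exact (ENNReal.mul_le_mul_iff_right two_ne_zero ENNReal.ofNat_ne_top).mp h4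

lemma enorm_tsum_le_complex {ι : Type} (h : ι → ℂ) :
    (‖∑' i, h i‖₊ : ℝ≥0∞) ≤ ∑' i, (‖h i‖₊ : ℝ≥0∞) := by
  by_cases hs : Summable fun i => ‖h i‖₊
  · calc (‖∑' i, h i‖₊ : ℝ≥0∞) ≤ ((∑' i, ‖h i‖₊ : ℝ≥0) : ℝ≥0∞) := by
          exact_mod_cast nnnorm_tsum_le hs
      _ = ∑' i, (‖h i‖₊ : ℝ≥0∞) := ENNReal.coe_tsum hs
  · have : ∑' i, (‖h i‖₊ : ℝ≥0∞) = ⊤ := by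
      by_contra hne
      exact hs (tsum_coe_ne_top_iff_summable.mp hne)
    simp [this]


namespace CountableGroupoid

variable (G : CountableGroupoid)

lemma inv_inv'' (a : G.E) : G.inv (G.inv a) = a := by
  have key := G.mul_assoc' (G.inv (G.inv a)) (G.inv a) a (G.s_inv (G.inv a)) (G.s_inv a)
  simp only [G.inv_mul] at key
  rw [G.s_inv, G.unit_mul] at key
  have hs : G.s (G.inv (G.inv a)) = G.s a := by rw [G.s_inv, G.r_inv]
  calc G.inv (G.inv a) = G.mul (G.inv (G.inv a)) (G.unit (G.s (G.inv (G.inv a)))) :=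
        (G.mul_unit _).symm
    _ = G.mul (G.inv (G.inv a)) (G.unit (G.s a)) := by rw [hs]
    _ = a := key.symm

/-- The inversion bijection between the `r`-fibre and the `s`-fibre of `x`. -/
def rsEquiv (x : G.X) : {γ : G.E // G.r γ = x} ≃ {γ : G.E // G.s γ = x} where
  toFun q := ⟨G.inv q.1, by rw [G.s_inv, q.2]⟩
  invFun q := ⟨G.inv q.1, by rw [G.r_inv, q.2]⟩
  left_inv q := Subtype.ext (G.inv_inv'' q.1)
  right_inv q := Subtype.ext (G.inv_inv'' q.1)

/-- Factorizations of `γ` are parametrized by the `s`-fibre of `s γ`. -/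
def factEquiv (γ : G.E) : {b : G.E // G.s b = G.s γ} ≃ G.Factorizations γ where
  toFun q :=
    ⟨(G.mul γ (G.inv q.1), q.1), by
      have hcomp : G.s γ = G.r (G.inv q.1) := by rw [G.r_inv, q.2]
      constructor
      · rw [G.s_mul _ _ hcomp, G.s_inv]
      · rw [G.mul_assoc' _ _ _ hcomp (G.s_inv q.1), G.inv_mul, q.2, G.mul_unit]⟩
  invFun p := ⟨p.1.2, by
    have h1 := G.s_mul p.1.1 p.1.2 p.2.1
    rw [p.2.2] at h1
    exact h1.symm⟩
  left_inv q := rfl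
  right_inv := by
    rintro ⟨⟨a, b⟩, hc, rfl⟩
    refine Subtype.ext (Prod.ext ?_ rfl)
    show G.mul (G.mul a b) (G.inv b) = a
    rw [G.mul_assoc' _ _ _ hc (G.r_inv b).symm, G.mul_inv, ← hc, G.mul_unit]

lemma sigma_fact_ext (x : G.X) (p q : Σ b : {b : G.E // G.s b = x}, G.Factorizations b.1)
    (h1 : p.1.1 = q.1.1) (h2 : p.2.1 = q.2.1) : p = q := by
  obtain ⟨⟨pb, hpb⟩, ⟨pp, hp⟩⟩ := p
  obtain ⟨⟨qb, hqb⟩, ⟨qp, hq⟩⟩ := q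
  dsimp at h1 h2
  subst h1; subst h2
  rfl

/-- Pairs (fibre element, factorization) reindexed as composable pairs. -/
def sigmaFactEquiv (x : G.X) :
    (Σ q : {b : G.E // G.s b = x}, {c : G.E // G.s c = G.r q.1}) ≃
      (Σ p : {b : G.E // G.s b = x}, G.Factorizations p.1) where
  toFun q := ⟨⟨G.mul q.2.1 q.1.1, by rw [G.s_mul _ _ q.2.2, q.1.2]⟩,
    ⟨(q.2.1, q.1.1), ⟨q.2.2, rfl⟩⟩⟩
  invFun p := ⟨⟨p.2.1.2, by
    have h1 := G.s_mul p.2.1.1 p.2.1.2 p.2.2.1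
    rw [p.2.2.2] at h1
    exact h1.symm.trans p.1.2⟩,
    ⟨p.2.1.1, p.2.2.1⟩⟩
  left_inv q := rfl
  right_inv p := G.sigma_fact_ext x _ p p.2.2.2 rfl

end CountableGroupoid

/-- if `g = δ^{1/2} f` with `f ∈ I(G)` (where `δ = dν⁻¹/dν`), then right
convolution by `g` is bounded on `L²(G,ν)` with norm at most `‖f‖_I`. -/
theorem right_convolution_bounded (G : CountableGroupoid) [MeasurableSpace G.X]
    (μ : Measure G.X) [IsProbabilityMeasure μ]
    (δ : G.E → ℝ) (hδpos : ∀ γ, 0 < δ γ)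
    (hδ : ∀ F : G.E → ℝ≥0∞,
      (∫⁻ x, G.sFiberSum (fun γ => F (G.inv γ)) x ∂μ) =
      ∫⁻ x, G.sFiberSum (fun γ => ENNReal.ofReal (δ γ) * F γ) x ∂μ)
    (g f : G.E → ℂ) (hgf : ∀ γ, g γ = (Real.sqrt (δ γ) : ℂ) * f γ)
    (hf : G.Inorm μ f ≠ ⊤) (ξ : G.E → ℂ) :
    (∫⁻ x, G.sFiberSum (fun γ => (‖G.conv ξ g γ‖₊ : ℝ≥0∞) ^ 2) x ∂μ) ≤
      (G.Inorm μ f) ^ 2 * ∫⁻ x, G.sFiberSum (fun γ => (‖ξ γ‖₊ : ℝ≥0∞) ^ 2) x ∂μ := by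
  classical
  -- a.e. bounds coming from the definition of the I-norm
  have h_s_ae : ∀ᵐ x ∂μ, G.sFiberSum (fun γ => (‖f γ‖₊ : ℝ≥0∞)) x ≤ G.Inorm μ f := by
    filter_upwards [ENNReal.ae_le_essSup
      (fun x => G.sFiberSum (fun γ => (‖f γ‖₊ : ℝ≥0∞)) x) (μ := μ)] with x hx
    exact hx.trans (le_max_right _ _)
  have h_r_ae : ∀ᵐ x ∂μ, G.rFiberSum (fun γ => (‖f γ‖₊ : ℝ≥0∞)) x ≤ G.Inorm μ f := by
    filter_upwards [ENNReal.ae_le_essSup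
      (fun x => G.rFiberSum (fun γ => (‖f γ‖₊ : ℝ≥0∞)) x) (μ := μ)] with x hx
    exact hx.trans (le_max_left _ _)
  -- the norm of g
  have hg : ∀ γ : G.E, (‖g γ‖₊ : ℝ≥0∞)
      = ENNReal.ofReal (Real.sqrt (δ γ)) * (‖f γ‖₊ : ℝ≥0∞) := by
    intro γ
    rw [hgf γ, nnnorm_mul, ENNReal.coe_mul, Complex.nnnorm_real,
      (show ((‖Real.sqrt (δ γ)‖₊ : ℝ≥0∞)) = ENNReal.ofReal (Real.sqrt (δ γ)) from
        Real.enorm_eq_ofReal (Real.sqrt_nonneg _))]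
  have hsqrt : ∀ γ : G.E, ENNReal.ofReal (Real.sqrt (δ γ)) ^ 2 = ENNReal.ofReal (δ γ) := by
    intro γ
    rw [sq, ← ENNReal.ofReal_mul (Real.sqrt_nonneg _), Real.mul_self_sqrt (hδpos γ).le]
  -- the Schur kernel
  set A : G.E → ℝ≥0∞ := fun γ => ∑' p : G.Factorizations γ,
    (‖f p.1.2‖₊ : ℝ≥0∞) * (ENNReal.ofReal (δ p.1.2) * (‖ξ p.1.1‖₊ : ℝ≥0∞) ^ 2) with hA
  -- pointwise Cauchy-Schwarz estimate
  have hpt : ∀ γ : G.E, (‖G.conv ξ g γ‖₊ : ℝ≥0∞) ^ 2 ≤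
      A γ * G.sFiberSum (fun b => (‖f b‖₊ : ℝ≥0∞)) (G.s γ) := by
    intro γ
    have h1 : (‖G.conv ξ g γ‖₊ : ℝ≥0∞) ≤
        ∑' p : G.Factorizations γ, (‖f p.1.2‖₊ : ℝ≥0∞) *
          (ENNReal.ofReal (Real.sqrt (δ p.1.2)) * (‖ξ p.1.1‖₊ : ℝ≥0∞)) := by
      refine (enorm_tsum_le_complex _).trans (le_of_eq (tsum_congr fun p => ?_))
      rw [nnnorm_mul, ENNReal.coe_mul, hg]
      ring
    have h2 := pow_le_pow_left₀ zero_le h1 2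
    refine h2.trans ?_
    refine (ennreal_tsum_cs (fun p : G.Factorizations γ => (‖f p.1.2‖₊ : ℝ≥0∞))
      (fun p => ENNReal.ofReal (Real.sqrt (δ p.1.2)) * (‖ξ p.1.1‖₊ : ℝ≥0∞))).trans
      (le_of_eq ?_)
    congr 1
    · rw [hA]
      exact tsum_congr fun p => by rw [mul_pow, hsqrt]
    · exact ((G.factEquiv γ).tsum_eq fun p : G.Factorizations γ =>
        ((‖f p.1.2‖₊ : ℝ≥0∞))).symm
  -- main chain of estimates
  calc ∫⁻ x, G.sFiberSum (fun γ => (‖G.conv ξ g γ‖₊ : ℝ≥0∞) ^ 2) x ∂μ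
      ≤ ∫⁻ x, G.sFiberSum A x * G.sFiberSum (fun b => (‖f b‖₊ : ℝ≥0∞)) x ∂μ := by
        refine lintegral_mono fun x => ?_
        calc G.sFiberSum (fun γ => (‖G.conv ξ g γ‖₊ : ℝ≥0∞) ^ 2) x
            = ∑' q : {γ : G.E // G.s γ = x}, (‖G.conv ξ g q.1‖₊ : ℝ≥0∞) ^ 2 := rfl
          _ ≤ ∑' q : {γ : G.E // G.s γ = x},
              A q.1 * G.sFiberSum (fun b => (‖f b‖₊ : ℝ≥0∞)) x := by
              refine ENNReal.tsum_le_tsum fun q => ?_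
              have h := hpt q.1
              rwa [q.2] at h
          _ = G.sFiberSum A x * G.sFiberSum (fun b => (‖f b‖₊ : ℝ≥0∞)) x :=
              ENNReal.tsum_mul_right
    _ ≤ G.Inorm μ f * ∫⁻ x, G.sFiberSum A x ∂μ := by
        refine (lintegral_mono_ae ?_).trans (le_of_eq (lintegral_const_mul' _ _ hf))
        filter_upwards [h_s_ae] with x hx
        rw [mul_comm (G.Inorm μ f)]
        exact mul_le_mul' le_rfl hx
    _ = G.Inorm μ f * ∫⁻ x, G.sFiberSum (fun γ => ENNReal.ofReal (δ γ) *
          ((‖f γ‖₊ : ℝ≥0∞) * G.sFiberSum (fun b => (‖ξ b‖₊ : ℝ≥0∞) ^ 2) (G.r γ))) x ∂μ := by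
        congr 1
        refine lintegral_congr fun x => ?_
        calc G.sFiberSum A x
            = ∑' q : {γ : G.E // G.s γ = x}, ∑' p : G.Factorizations q.1,
                (‖f p.1.2‖₊ : ℝ≥0∞) * (ENNReal.ofReal (δ p.1.2) * (‖ξ p.1.1‖₊ : ℝ≥0∞) ^ 2) := rfl
          _ = ∑' z : Σ q : {γ : G.E // G.s γ = x}, G.Factorizations q.1,
                (‖f z.2.1.2‖₊ : ℝ≥0∞) * (ENNReal.ofReal (δ z.2.1.2) * (‖ξ z.2.1.1‖₊ : ℝ≥0∞) ^ 2) :=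
              (ENNReal.tsum_sigma' (fun z : Σ q : {γ : G.E // G.s γ = x}, G.Factorizations q.1 =>
                (‖f z.2.1.2‖₊ : ℝ≥0∞) * (ENNReal.ofReal (δ z.2.1.2) * (‖ξ z.2.1.1‖₊ : ℝ≥0∞) ^ 2))).symm
          _ = ∑' z : Σ q : {b : G.E // G.s b = x}, {c : G.E // G.s c = G.r q.1},
                (‖f z.1.1‖₊ : ℝ≥0∞) * (ENNReal.ofReal (δ z.1.1) * (‖ξ z.2.1‖₊ : ℝ≥0∞) ^ 2) :=
              ((G.sigmaFactEquiv x).tsum_eq _).symm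
          _ = ∑' q : {b : G.E // G.s b = x}, ∑' c : {c : G.E // G.s c = G.r q.1},
                (‖f q.1‖₊ : ℝ≥0∞) * (ENNReal.ofReal (δ q.1) * (‖ξ c.1‖₊ : ℝ≥0∞) ^ 2) :=
              ENNReal.tsum_sigma' (fun z : Σ q : {b : G.E // G.s b = x}, {c : G.E // G.s c = G.r q.1} =>
                (‖f z.1.1‖₊ : ℝ≥0∞) * (ENNReal.ofReal (δ z.1.1) * (‖ξ z.2.1‖₊ : ℝ≥0∞) ^ 2))
          _ = ∑' q : {b : G.E // G.s b = x}, ENNReal.ofReal (δ q.1) *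
                ((‖f q.1‖₊ : ℝ≥0∞) * G.sFiberSum (fun b => (‖ξ b‖₊ : ℝ≥0∞) ^ 2) (G.r q.1)) := by
              refine tsum_congr fun q => ?_
              rw [show G.sFiberSum (fun b => (‖ξ b‖₊ : ℝ≥0∞) ^ 2) (G.r q.1)
                  = ∑' c : {c : G.E // G.s c = G.r q.1}, (‖ξ c.1‖₊ : ℝ≥0∞) ^ 2 from rfl,
                ← ENNReal.tsum_mul_left, ← ENNReal.tsum_mul_left]
              exact tsum_congr fun c => by ring
          _ = G.sFiberSum (fun γ => ENNReal.ofReal (δ γ) *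
                ((‖f γ‖₊ : ℝ≥0∞) * G.sFiberSum (fun b => (‖ξ b‖₊ : ℝ≥0∞) ^ 2) (G.r γ))) x := rfl
    _ = G.Inorm μ f * ∫⁻ x, G.rFiberSum (fun b => (‖f b‖₊ : ℝ≥0∞)) x *
          G.sFiberSum (fun b => (‖ξ b‖₊ : ℝ≥0∞) ^ 2) x ∂μ := by
        congr 1
        rw [← hδ (fun γ => (‖f γ‖₊ : ℝ≥0∞) *
          G.sFiberSum (fun b => (‖ξ b‖₊ : ℝ≥0∞) ^ 2) (G.r γ))]
        refine lintegral_congr fun x => ?_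
        calc G.sFiberSum (fun γ => (‖f (G.inv γ)‖₊ : ℝ≥0∞) *
              G.sFiberSum (fun b => (‖ξ b‖₊ : ℝ≥0∞) ^ 2) (G.r (G.inv γ))) x
            = ∑' q : {γ : G.E // G.s γ = x}, (‖f (G.inv q.1)‖₊ : ℝ≥0∞) *
              G.sFiberSum (fun b => (‖ξ b‖₊ : ℝ≥0∞) ^ 2) x := by
              refine tsum_congr fun q => ?_
              simp only [G.r_inv, q.2]
          _ = (∑' q : {γ : G.E // G.s γ = x}, (‖f (G.inv q.1)‖₊ : ℝ≥0∞)) *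
              G.sFiberSum (fun b => (‖ξ b‖₊ : ℝ≥0∞) ^ 2) x := ENNReal.tsum_mul_right
          _ = G.rFiberSum (fun b => (‖f b‖₊ : ℝ≥0∞)) x *
              G.sFiberSum (fun b => (‖ξ b‖₊ : ℝ≥0∞) ^ 2) x := by
              congr 1
              refine (((G.rsEquiv x).tsum_eq
                (fun q : {γ : G.E // G.s γ = x} => ((‖f (G.inv q.1)‖₊ : ℝ≥0∞)))).symm.trans ?_)
              exact tsum_congr fun p => by
                simp only [CountableGroupoid.rsEquiv, Equiv.coe_fn_mk, G.inv_inv'']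
    _ ≤ G.Inorm μ f * (G.Inorm μ f *
          ∫⁻ x, G.sFiberSum (fun γ => (‖ξ γ‖₊ : ℝ≥0∞) ^ 2) x ∂μ) := by
        refine mul_le_mul' le_rfl ?_
        refine (lintegral_mono_ae ?_).trans (le_of_eq (lintegral_const_mul' _ _ hf))
        filter_upwards [h_r_ae] with x hx
        exact mul_le_mul' hx le_rfl
    _ = (G.Inorm μ f) ^ 2 * ∫⁻ x, G.sFiberSum (fun γ => (‖ξ γ‖₊ : ℝ≥0∞) ^ 2) x ∂μ := by
        rw [pow_two, mul_assoc]
end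

section
/- Let G be a countable groupoid and ψ : G → ℝ a real conditionally negative definite function: ψ vanishes on units, ψ(γ) = ψ(γ⁻¹), and for every unit x, all γ₁,…,γ_n ∈ G^x and real λ₁,…,λ_n with Σλ_i = 0, one has Σ_{i,j} λ_i λ_j ψ(γ_i⁻¹γ_j) ≤ 0. Then for every t > 0, the function γ ↦ exp(−tψ(γ)) is positive definite on G. -/
open MeasureTheory ENNReal Filter Topology
open scoped ComplexOrder

open Finset

namespace SchoenbergAux

/-! ### Quadratic form machinery -/

variable {n : ℕ}

def QPos (f : Fin n → Fin n → ℝ) : Prop :=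
  ∀ c : Fin n → ℝ, 0 ≤ ∑ i, ∑ j, c i * c j * f i j

lemma qpos_decomp (f : Fin n → Fin n → ℝ) (hsym : ∀ i j, f i j = f j i)
    (hf : QPos f) : ∃ M : Fin n → Fin n → ℝ, ∀ i j, f i j = ∑ k, M k i * M k j := by
  have hps : (Matrix.of f).PosSemidef := by
    refine Matrix.PosSemidef.of_dotProduct_mulVec_nonneg ?_ ?_
    · ext i j
      simp only [Matrix.conjTranspose_apply, Matrix.of_apply, star_trivial]
      exact hsym j i
    · intro c
      have h := hf c
      have e : ∑ i, ∑ j, c i * c j * f i j = dotProduct (star c) ((Matrix.of f).mulVec c) := by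
        simp only [dotProduct, Matrix.mulVec, Pi.star_apply, star_trivial,
          Matrix.of_apply, dotProduct]
        exact Finset.sum_congr rfl fun i _ => by
          rw [Finset.mul_sum]
          exact Finset.sum_congr rfl fun j _ => by ring
      rw [← e]; exact h
  open scoped MatrixOrder in obtain ⟨B, hB⟩ := CStarAlgebra.nonneg_iff_eq_star_mul_self.mp hps.nonneg
  refine ⟨fun k i => B k i, fun i j => ?_⟩
  have h2 : Matrix.of f i j = (B.conjTranspose * B) i j := by rw [hB, Matrix.star_eq_conjTranspose]
  simpa [Matrix.mul_apply, Matrix.conjTranspose_apply] using h2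

lemma qpos_mul (f g : Fin n → Fin n → ℝ) (hsym : ∀ i j, f i j = f j i)
    (hf : QPos f) (hg : QPos g) : QPos (fun i j => f i j * g i j) := by
  obtain ⟨M, hM⟩ := qpos_decomp f hsym hf
  intro c
  have key : ∀ i j, c i * c j * (f i j * g i j)
      = ∑ k, (c i * M k i) * (c j * M k j) * g i j := by
    intro i j
    rw [hM i j, Finset.sum_mul, Finset.mul_sum]
    exact Finset.sum_congr rfl fun k _ => by ring
  calc (0:ℝ) ≤ ∑ k, ∑ i, ∑ j, (c i * M k i) * (c j * M k j) * g i j :=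
        Finset.sum_nonneg fun k _ => hg fun i => c i * M k i
    _ = ∑ i, ∑ k, ∑ j, (c i * M k i) * (c j * M k j) * g i j := Finset.sum_comm
    _ = ∑ i, ∑ j, ∑ k, (c i * M k i) * (c j * M k j) * g i j :=
        Finset.sum_congr rfl fun i _ => Finset.sum_comm
    _ = ∑ i, ∑ j, c i * c j * (f i j * g i j) :=
        Finset.sum_congr rfl fun i _ => Finset.sum_congr rfl fun j _ => (key i j).symm

lemma qpos_pow (f : Fin n → Fin n → ℝ) (hsym : ∀ i j, f i j = f j i)
    (hf : QPos f) : ∀ k, QPos (fun i j => f i j ^ k)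
  | 0 => by
      intro c
      simp only [pow_zero, mul_one]
      rw [← Finset.sum_mul_sum]
      exact mul_self_nonneg _
  | (k+1) => by
      have h := qpos_mul (fun i j => f i j ^ k) f
        (fun i j => by show f i j ^ k = f j i ^ k; rw [hsym i j]) (qpos_pow f hsym hf k) hf
      intro c
      have := h c
      simpa only [pow_succ] using this

lemma qpos_exp (f : Fin n → Fin n → ℝ) (hsym : ∀ i j, f i j = f j i)
    (hf : QPos f) : QPos (fun i j => Real.exp (f i j)) := by
  intro c
  have hexp : ∀ x : ℝ, Real.exp x = ∑' k : ℕ, x ^ k / (Nat.factorial k : ℝ) := by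
    intro x
    rw [Real.exp_eq_exp_ℝ, NormedSpace.exp_eq_tsum_div]
  have hsummable : ∀ i j, Summable (fun k : ℕ => c i * c j * (f i j ^ k / (Nat.factorial k : ℝ))) :=
    fun i j => (Real.summable_pow_div_factorial (f i j)).mul_left _
  have hterm : ∀ i j : Fin n, c i * c j * Real.exp (f i j)
      = ∑' k : ℕ, c i * c j * (f i j ^ k / (Nat.factorial k : ℝ)) := by
    intro i j
    rw [hexp, ← tsum_mul_left]
  have h1 : ∑ i, ∑ j, c i * c j * Real.exp (f i j)
      = ∑' k : ℕ, ∑ i, ∑ j, c i * c j * (f i j ^ k / (Nat.factorial k : ℝ)) := by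
    calc ∑ i, ∑ j, c i * c j * Real.exp (f i j)
        = ∑ i, ∑ j, ∑' k : ℕ, c i * c j * (f i j ^ k / (Nat.factorial k : ℝ)) :=
          Finset.sum_congr rfl fun i _ => Finset.sum_congr rfl fun j _ => hterm i j
      _ = ∑ i, ∑' k : ℕ, ∑ j, c i * c j * (f i j ^ k / (Nat.factorial k : ℝ)) :=
          Finset.sum_congr rfl fun i _ => (Summable.tsum_finsetSum fun j _ => hsummable i j).symm
      _ = ∑' k : ℕ, ∑ i, ∑ j, c i * c j * (f i j ^ k / (Nat.factorial k : ℝ)) :=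
          (Summable.tsum_finsetSum fun i _ => summable_sum fun j _ => hsummable i j).symm
  rw [h1]
  refine tsum_nonneg fun k => ?_
  have e : (∑ i, ∑ j, c i * c j * (f i j ^ k / (Nat.factorial k : ℝ)))
      = (∑ i, ∑ j, c i * c j * f i j ^ k) / (Nat.factorial k : ℝ) := by
    rw [Finset.sum_div]
    exact Finset.sum_congr rfl fun i _ => by
      rw [Finset.sum_div]
      exact Finset.sum_congr rfl fun j _ => by ring
  rw [e]
  exact div_nonneg (qpos_pow f hsym hf k c) (Nat.cast_nonneg _)

end SchoenbergAux

namespace SchoenbergAux2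

variable {G : CountableGroupoid}

lemma inv_unique (a b : G.E) (h1 : G.s a = G.r b) (h2 : G.mul a b = G.unit (G.r a)) :
    b = G.inv a := by
  have h3 : G.mul (G.mul (G.inv a) a) b = G.mul (G.inv a) (G.mul a b) :=
    G.mul_assoc' _ _ _ (G.s_inv a) h1
  rw [G.inv_mul, h2, h1, G.unit_mul, ← G.s_inv a, G.mul_unit] at h3
  exact h3

lemma inv_inv (a : G.E) : G.inv (G.inv a) = a := by
  refine (inv_unique (G.inv a) a (G.s_inv a) ?_).symm
  rw [G.r_inv, G.inv_mul]

lemma inv_unit (x : G.X) : G.inv (G.unit x) = G.unit x := by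
  refine (inv_unique (G.unit x) (G.unit x) (by rw [G.s_unit, G.r_unit]) ?_).symm
  rw [G.r_unit]
  have := G.mul_unit (G.unit x)
  rwa [G.s_unit] at this

lemma inv_mul_rev (a b : G.E) (h : G.s a = G.r b) :
    G.inv (G.mul a b) = G.mul (G.inv b) (G.inv a) := by
  have hba : G.s (G.inv b) = G.r (G.inv a) := by rw [G.s_inv, G.r_inv, h]
  refine (inv_unique (G.mul a b) (G.mul (G.inv b) (G.inv a)) ?_ ?_).symm
  · rw [G.s_mul _ _ h, G.r_mul _ _ hba, G.r_inv]
  · have e1 : G.mul (G.mul a b) (G.mul (G.inv b) (G.inv a))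
        = G.mul a (G.mul b (G.mul (G.inv b) (G.inv a))) := by
      refine G.mul_assoc' a b _ h ?_
      rw [G.r_mul _ _ hba, G.r_inv]
    have e2 : G.mul b (G.mul (G.inv b) (G.inv a))
        = G.mul (G.mul b (G.inv b)) (G.inv a) :=
      (G.mul_assoc' b (G.inv b) (G.inv a) (G.r_inv b).symm hba).symm
    have e3 : G.mul (G.mul b (G.inv b)) (G.inv a) = G.inv a := by
      rw [G.mul_inv]
      have : G.r b = G.r (G.inv a) := by rw [G.r_inv, h]
      rw [this, G.unit_mul]
    rw [e1, e2, e3, G.mul_inv, G.r_mul _ _ h]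

end SchoenbergAux2

/-- Schoenberg, fibrewise: if `ψ` is real conditionally negative definite
on the groupoid `G`, then `γ ↦ exp (−t ψ γ)` is positive definite for every `t > 0`. -/
theorem schoenberg_groupoid (G : CountableGroupoid) (ψ : G.E → ℝ)
    (hψ : G.IsCondNegDef ψ) (t : ℝ) (ht : 0 < t) :
    G.IsPosDef fun γ => ((Real.exp (-(t * ψ γ)) : ℝ) : ℂ) := by
  intro x n γ hγ lam
  -- abbreviations
  have hcomp : ∀ i j : Fin n, G.s (G.inv (γ i)) = G.r (γ j) := fun i j => by
    rw [G.s_inv, hγ i, hγ j]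
  set p : Fin n → Fin n → G.E := fun i j => G.mul (G.inv (γ i)) (γ j) with hp
  have hpsym : ∀ i j, ψ (p i j) = ψ (p j i) := by
    intro i j
    have hinv : G.inv (p i j) = p j i := by
      show G.inv (G.mul (G.inv (γ i)) (γ j)) = _
      rw [SchoenbergAux2.inv_mul_rev _ _ (hcomp i j), SchoenbergAux2.inv_inv]
    rw [← hinv, hψ.2.1]
  -- positivity of the kernel B i j = ψ γi + ψ γj - ψ (p i j)
  have hB : ∀ c : Fin n → ℝ,
      0 ≤ ∑ i, ∑ j, c i * c j * (ψ (γ i) + ψ (γ j) - ψ (p i j)) := by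
    intro c
    have hγ' : ∀ i : Fin (n+1), G.r ((Fin.cons (G.unit x) γ : Fin (n+1) → G.E) i) = x := by
      intro i
      refine Fin.cases ?_ ?_ i
      · simp [G.r_unit]
      · intro i; simp [hγ i]
    have hc' : ∑ i : Fin (n+1), (Fin.cons (-∑ k, c k) c : Fin (n+1) → ℝ) i = 0 := by
      simp [Fin.sum_univ_succ]
    have key := hψ.2.2 x (n+1) (Fin.cons (G.unit x) γ) hγ'
      (Fin.cons (-∑ k, c k) c) hc'
    simp only [Fin.sum_univ_succ, Fin.cons_zero, Fin.cons_succ] at key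
    -- compute the four kinds of ψ-values
    have hv00 : ψ (G.mul (G.inv (G.unit x)) (G.unit x)) = 0 := by
      rw [SchoenbergAux2.inv_unit]
      have : G.mul (G.unit x) (G.unit x) = G.unit x := by
        have := G.mul_unit (G.unit x); rwa [G.s_unit] at this
      rw [this, hψ.1]
    have hv0j : ∀ j : Fin n, ψ (G.mul (G.inv (G.unit x)) (γ j)) = ψ (γ j) := by
      intro j
      rw [SchoenbergAux2.inv_unit, ← hγ j, G.unit_mul]
    have hvi0 : ∀ i : Fin n, ψ (G.mul (G.inv (γ i)) (G.unit x)) = ψ (γ i) := by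
      intro i
      have h1 : G.unit x = G.unit (G.s (G.inv (γ i))) := by rw [G.s_inv, hγ i]
      rw [h1, G.mul_unit, hψ.2.1]
    rw [hv00] at key
    simp only [hv0j, hvi0] at key
    -- now massage both `key` and the goal into linear combinations of the same atoms
    have eL : ∀ i, ∑ j, c i * c j * (ψ (γ i) + ψ (γ j) - ψ (p i j))
        = c i * ψ (γ i) * (∑ k, c k) + c i * (∑ k, c k * ψ (γ k))
          - ∑ j, c i * c j * ψ (p i j) := by
      intro i
      calc ∑ j, c i * c j * (ψ (γ i) + ψ (γ j) - ψ (p i j))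
          = ∑ j, (c i * ψ (γ i) * c j + c i * (c j * ψ (γ j)) - c i * c j * ψ (p i j)) :=
            Finset.sum_congr rfl fun j _ => by ring
        _ = ((∑ j, c i * ψ (γ i) * c j) + ∑ j, c i * (c j * ψ (γ j)))
              - ∑ j, c i * c j * ψ (p i j) := by
            rw [Finset.sum_sub_distrib, Finset.sum_add_distrib]
        _ = c i * ψ (γ i) * (∑ k, c k) + c i * (∑ k, c k * ψ (γ k))
              - ∑ j, c i * c j * ψ (p i j) := by
            rw [← Finset.mul_sum, ← Finset.mul_sum]
    have eSum : ∑ i, ∑ j, c i * c j * (ψ (γ i) + ψ (γ j) - ψ (p i j))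
        = (∑ k, c k * ψ (γ k)) * (∑ k, c k) + (∑ k, c k) * (∑ k, c k * ψ (γ k))
          - ∑ i, ∑ j, c i * c j * ψ (p i j) := by
      calc ∑ i, ∑ j, c i * c j * (ψ (γ i) + ψ (γ j) - ψ (p i j))
          = ∑ i, (c i * ψ (γ i) * (∑ k, c k) + c i * (∑ k, c k * ψ (γ k))
              - ∑ j, c i * c j * ψ (p i j)) := Finset.sum_congr rfl fun i _ => eL i
        _ = ((∑ i, c i * ψ (γ i) * (∑ k, c k)) + ∑ i, c i * (∑ k, c k * ψ (γ k)))
              - ∑ i, ∑ j, c i * c j * ψ (p i j) := by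
            rw [Finset.sum_sub_distrib, Finset.sum_add_distrib]
        _ = (∑ k, c k * ψ (γ k)) * (∑ k, c k) + (∑ k, c k) * (∑ k, c k * ψ (γ k))
              - ∑ i, ∑ j, c i * c j * ψ (p i j) := by
            rw [← Finset.sum_mul, ← Finset.sum_mul]
    have k1 : (∑ y : Fin n, (-∑ k, c k) * c y * ψ (γ y))
        = -((∑ k, c k) * ∑ k, c k * ψ (γ k)) := by
      calc (∑ y : Fin n, (-∑ k, c k) * c y * ψ (γ y))
          = ∑ y, (-∑ k, c k) * (c y * ψ (γ y)) :=
            Finset.sum_congr rfl fun y _ => by ring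
        _ = (-∑ k, c k) * ∑ y, c y * ψ (γ y) := (Finset.mul_sum _ _ _).symm
        _ = -((∑ k, c k) * ∑ k, c k * ψ (γ k)) := by ring
    have k2 : (∑ y : Fin n, (c y * -∑ k, c k) * ψ (γ y))
        = -((∑ k, c k) * ∑ k, c k * ψ (γ k)) := by
      calc (∑ y : Fin n, (c y * -∑ k, c k) * ψ (γ y))
          = ∑ y, (-∑ k, c k) * (c y * ψ (γ y)) :=
            Finset.sum_congr rfl fun y _ => by ring
        _ = (-∑ k, c k) * ∑ y, c y * ψ (γ y) := (Finset.mul_sum _ _ _).symm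
        _ = -((∑ k, c k) * ∑ k, c k * ψ (γ k)) := by ring
    have k3 : (∑ y : Fin n, ((c y * -∑ k, c k) * ψ (γ y)
          + ∑ z, c y * c z * ψ (G.mul (G.inv (γ y)) (γ z))))
        = (∑ y : Fin n, (c y * -∑ k, c k) * ψ (γ y))
          + ∑ y : Fin n, ∑ z, c y * c z * ψ (G.mul (G.inv (γ y)) (γ z)) :=
      Finset.sum_add_distrib
    have hpd : (∑ i, ∑ j, c i * c j * ψ (G.mul (G.inv (γ i)) (γ j)))
        = ∑ i, ∑ j, c i * c j * ψ (p i j) := rfl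
    rw [k3, k1, k2, hpd] at key
    simp only [mul_zero, zero_add] at key
    rw [eSum]
    linarith [key]
  -- real positivity of the exponentiated kernel
  have hreal : ∀ c : Fin n → ℝ,
      0 ≤ ∑ i, ∑ j, c i * c j * Real.exp (-(t * ψ (p i j))) := by
    intro c
    have hA : SchoenbergAux.QPos
        (fun i j => t * (ψ (γ i) + ψ (γ j) - ψ (p i j))) := by
      intro d
      have h0 := hB d
      have e : ∑ i, ∑ j, d i * d j * (t * (ψ (γ i) + ψ (γ j) - ψ (p i j)))
          = t * ∑ i, ∑ j, d i * d j * (ψ (γ i) + ψ (γ j) - ψ (p i j)) := by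
        rw [Finset.mul_sum]
        refine Finset.sum_congr rfl fun i _ => ?_
        rw [Finset.mul_sum]
        exact Finset.sum_congr rfl fun j _ => by ring
      rw [e]
      exact mul_nonneg ht.le h0
    have hAsym : ∀ i j,
        (fun i j => t * (ψ (γ i) + ψ (γ j) - ψ (p i j))) i j
          = (fun i j => t * (ψ (γ i) + ψ (γ j) - ψ (p i j))) j i := by
      intro i j
      show t * (ψ (γ i) + ψ (γ j) - ψ (p i j)) = t * (ψ (γ j) + ψ (γ i) - ψ (p j i))
      rw [← hpsym i j]; ring
    have hE := SchoenbergAux.qpos_exp _ hAsym hA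
      (fun i => c i * Real.exp (-(t * ψ (γ i))))
    refine le_of_le_of_eq hE (Finset.sum_congr rfl fun i _ =>
      Finset.sum_congr rfl fun j _ => ?_)
    show (c i * Real.exp (-(t * ψ (γ i)))) * (c j * Real.exp (-(t * ψ (γ j))))
        * Real.exp (t * (ψ (γ i) + ψ (γ j) - ψ (p i j)))
      = c i * c j * Real.exp (-(t * ψ (p i j)))
    rw [show -(t * ψ (p i j))
        = (-(t * ψ (γ i))) + ((-(t * ψ (γ j))) + t * (ψ (γ i) + ψ (γ j) - ψ (p i j)))
        from by ring, Real.exp_add, Real.exp_add]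
    ring
  -- reduce the complex statement to the real one
  rw [Complex.le_def]
  constructor
  · rw [Complex.re_sum]
    have e : ∀ i, (∑ j, lam i * (starRingEnd ℂ) (lam j)
          * ((Real.exp (-(t * ψ (p i j))) : ℝ) : ℂ)).re
        = ∑ j, (((lam i).re * (lam j).re + (lam i).im * (lam j).im)
            * Real.exp (-(t * ψ (p i j)))) := by
      intro i
      rw [Complex.re_sum]
      refine Finset.sum_congr rfl fun j _ => ?_
      simp only [Complex.mul_re, Complex.mul_im, Complex.ofReal_re, Complex.ofReal_im,
        Complex.conj_re, Complex.conj_im]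
      ring
    rw [Finset.sum_congr rfl fun i _ => e i]
    have esplit : ∑ i, ∑ j, (((lam i).re * (lam j).re + (lam i).im * (lam j).im)
          * Real.exp (-(t * ψ (p i j))))
        = (∑ i, ∑ j, (lam i).re * (lam j).re * Real.exp (-(t * ψ (p i j))))
          + ∑ i, ∑ j, (lam i).im * (lam j).im * Real.exp (-(t * ψ (p i j))) := by
      rw [← Finset.sum_add_distrib]
      refine Finset.sum_congr rfl fun i _ => ?_
      rw [← Finset.sum_add_distrib]
      exact Finset.sum_congr rfl fun j _ => by ring
    rw [esplit]
    simpa using add_nonneg (hreal fun i => (lam i).re) (hreal fun i => (lam i).im)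
  · rw [Complex.im_sum]
    have e : ∀ i, (∑ j, lam i * (starRingEnd ℂ) (lam j)
          * ((Real.exp (-(t * ψ (p i j))) : ℝ) : ℂ)).im
        = ∑ j, (((lam i).im * (lam j).re - (lam i).re * (lam j).im)
            * Real.exp (-(t * ψ (p i j)))) := by
      intro i
      rw [Complex.im_sum]
      refine Finset.sum_congr rfl fun j _ => ?_
      simp only [Complex.mul_re, Complex.mul_im, Complex.ofReal_re, Complex.ofReal_im,
        Complex.conj_re, Complex.conj_im]
      ring
    rw [Finset.sum_congr rfl fun i _ => e i]
    have key2 : ∀ i j : Fin n,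
        ((lam i).im * (lam j).re - (lam i).re * (lam j).im) * Real.exp (-(t * ψ (p i j)))
          + ((lam j).im * (lam i).re - (lam j).re * (lam i).im) * Real.exp (-(t * ψ (p j i)))
        = 0 := by
      intro i j
      rw [hpsym i j]
      ring
    have hcomm : (∑ i, ∑ j, ((lam j).im * (lam i).re - (lam j).re * (lam i).im)
          * Real.exp (-(t * ψ (p j i))))
        = ∑ i, ∑ j, ((lam i).im * (lam j).re - (lam i).re * (lam j).im)
          * Real.exp (-(t * ψ (p i j))) := Finset.sum_comm
    have hzero : (∑ i, ∑ j, ((lam i).im * (lam j).re - (lam i).re * (lam j).im)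
          * Real.exp (-(t * ψ (p i j))))
        + (∑ i, ∑ j, ((lam j).im * (lam i).re - (lam j).re * (lam i).im)
          * Real.exp (-(t * ψ (p j i)))) = 0 := by
      calc (∑ i, ∑ j, ((lam i).im * (lam j).re - (lam i).re * (lam j).im)
              * Real.exp (-(t * ψ (p i j))))
            + (∑ i, ∑ j, ((lam j).im * (lam i).re - (lam j).re * (lam i).im)
              * Real.exp (-(t * ψ (p j i))))
          = ∑ i, ((∑ j, ((lam i).im * (lam j).re - (lam i).re * (lam j).im)
              * Real.exp (-(t * ψ (p i j))))
            + ∑ j, ((lam j).im * (lam i).re - (lam j).re * (lam i).im)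
              * Real.exp (-(t * ψ (p j i)))) := Finset.sum_add_distrib.symm
        _ = ∑ i, ∑ j, (((lam i).im * (lam j).re - (lam i).re * (lam j).im)
              * Real.exp (-(t * ψ (p i j)))
            + ((lam j).im * (lam i).re - (lam j).re * (lam i).im)
              * Real.exp (-(t * ψ (p j i)))) :=
            Finset.sum_congr rfl fun i _ => Finset.sum_add_distrib.symm
        _ = 0 := Finset.sum_eq_zero fun i _ => Finset.sum_eq_zero fun j _ => key2 i j
    simp only [Complex.zero_im]
    linarith [hzero, hcomm]
end

section
/- Let T be a tree (connected acyclic graph) with path metric d. For any vertices v₁,…,v_n and real numbers λ₁,…,λ_n with Σ_i λ_i = 0, one has Σ_{i,j} λ_i λ_j d(v_i, v_j) ≤ 0. -/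
set_option maxHeartbeats 1000000

open SimpleGraph

private lemma tree_aux_reach' {V : Type} {T : SimpleGraph V} (a b : V)
    {u c : V} (w : T.Walk u c) :
    (T.deleteEdges {s(a,b)}).Reachable u c ∨ (T.deleteEdges {s(a,b)}).Reachable u a ∨
      (T.deleteEdges {s(a,b)}).Reachable u b := by
  induction w with
  | nil => exact Or.inl (Reachable.refl _)
  | @cons x y _ hadj p ih =>
    by_cases he : s(x,y) = s(a,b)
    · rw [Sym2.eq_iff] at he
      rcases he with ⟨rfl, rfl⟩ | ⟨rfl, rfl⟩
      · exact Or.inr (Or.inl (Reachable.refl _))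
      · exact Or.inr (Or.inr (Reachable.refl _))
    · have hadj' : (T.deleteEdges {s(a,b)}).Adj x y := by
        simp only [deleteEdges_adj, Set.mem_singleton_iff]
        exact ⟨hadj, he⟩
      rcases ih with h | h | h
      · exact Or.inl (hadj'.reachable.trans h)
      · exact Or.inr (Or.inl (hadj'.reachable.trans h))
      · exact Or.inr (Or.inr (hadj'.reachable.trans h))

private lemma tree_aux_reach {V : Type} {T : SimpleGraph V} {a b : V} (_hab : T.Adj a b)
    {u : V} (w : T.Walk u a) :
    (T.deleteEdges {s(a,b)}).Reachable u a ∨ (T.deleteEdges {s(a,b)}).Reachable u b := by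
  rcases tree_aux_reach' a b w with h | h | h
  · exact Or.inl h
  · exact Or.inl h
  · exact Or.inr h

private lemma tree_mem_edges_iff {V : Type} {T : SimpleGraph V} (hT : T.IsTree) {u w : V}
    (p : T.Walk u w) (hp : p.IsPath) (e : Sym2 V) :
    e ∈ p.edges ↔ ¬ (T.deleteEdges {e}).Reachable u w := by
  classical
  constructor
  · intro hmem hreach
    obtain ⟨q⟩ := hreach
    have hsub : ∀ f ∈ q.edges, f ∈ T.edgeSet := by
      intro f hf
      have := q.edges_subset_edgeSet hf
      rw [edgeSet_deleteEdges] at this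
      exact this.1
    have hnot : ∀ f ∈ q.edges, f ≠ e := by
      intro f hf
      have := q.edges_subset_edgeSet hf
      rw [edgeSet_deleteEdges] at this
      exact fun hfe => this.2 (by simp [hfe])
    let q' : T.Walk u w := q.transfer T hsub
    have hq'edges : q'.edges = q.edges := q.edges_transfer hsub
    have hne : e ∉ q'.bypass.edges := by
      intro hcon
      have := q'.edges_bypass_subset hcon
      rw [hq'edges] at this
      exact hnot e this rfl
    have := hT.IsAcyclic.path_unique ⟨p, hp⟩ ⟨q'.bypass, q'.bypass_isPath⟩
    rw [Subtype.mk.injEq] at this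
    rw [this] at hmem
    exact hne hmem
  · intro hnr
    by_contra hne
    exact hnr ⟨p.toDeleteEdges {e} (by
      intro f hf
      simp only [Set.mem_singleton_iff]
      rintro rfl
      exact hne hf)⟩

private lemma tree_reach_iff {V : Type} {T : SimpleGraph V} (hT : T.IsTree) {a b : V}
    (hab : T.Adj a b) (u w : V) :
    (T.deleteEdges {s(a,b)}).Reachable u w ↔
      ((T.deleteEdges {s(a,b)}).Reachable u a ↔ (T.deleteEdges {s(a,b)}).Reachable w a) := by
  have hbridge : ¬ (T.deleteEdges {s(a,b)}).Reachable a b := by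
    have := (isAcyclic_iff_forall_adj_isBridge.mp hT.IsAcyclic) hab
    exact this
  have hub : ∀ x : V, (T.deleteEdges {s(a,b)}).Reachable x a ∨
      (T.deleteEdges {s(a,b)}).Reachable x b := by
    intro x
    obtain ⟨p⟩ := hT.isConnected x a
    exact tree_aux_reach hab p
  constructor
  · intro huw
    constructor
    · intro hua; exact (huw.symm.trans hua)
    · intro hwa; exact (huw.trans hwa)
  · intro hiff
    by_cases hua : (T.deleteEdges {s(a,b)}).Reachable u a
    · exact hua.trans (hiff.mp hua).symm
    · have hub' := (hub u).resolve_left hua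
      have hwa : ¬ (T.deleteEdges {s(a,b)}).Reachable w a := fun hwa => hua (hiff.mpr hwa)
      have hwb := (hub w).resolve_left hwa
      exact hub'.trans hwb.symm


/-- the path metric of a tree is conditionally negative definite:
if `Σ λ_i = 0` then `Σ_{i,j} λ_i λ_j d(v_i, v_j) ≤ 0`. -/
theorem tree_dist_condNegDef {V : Type} (T : SimpleGraph V) (hT : T.IsTree)
    (n : ℕ) (v : Fin n → V) (lam : Fin n → ℝ) (h : ∑ i, lam i = 0) :
    ∑ i, ∑ j, lam i * lam j * (T.dist (v i) (v j) : ℝ) ≤ 0 := by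
  classical
  rcases isEmpty_or_nonempty (Fin n) with hn | hn
  · simp
  obtain ⟨i0⟩ := hn
  set r := v i0 with hr
  have hex : ∀ x : V, ∃ p : T.Walk r x, p.IsPath := fun x => (hT.existsUnique_path r x).exists
  choose P hP using hex
  set E : V → Finset (Sym2 V) := fun x => (P x).edges.toFinset with hE
  set U : Finset (Sym2 V) := Finset.univ.biUnion (fun i => E (v i)) with hU
  set g : V → Sym2 V → ℝ := fun x e => if e ∈ E x then 1 else 0 with hg
  have hdist : ∀ i j : Fin n,
      (T.dist (v i) (v j) : ℝ) = ∑ e ∈ U, (g (v i) e - g (v j) e)^2 := by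
    intro i j
    obtain ⟨q, hq, hqlen⟩ := (hT.isConnected (v i) (v j)).exists_path_of_dist
    have hsd : q.edges.toFinset = symmDiff (E (v i)) (E (v j)) := by
      ext e
      simp only [hE, Finset.mem_symmDiff, List.mem_toFinset]
      by_cases hset : e ∈ T.edgeSet
      · induction e using Sym2.ind with
        | _ a b =>
        have hab : T.Adj a b := hset
        have h1 := tree_mem_edges_iff hT q hq s(a,b)
        have h2 := tree_mem_edges_iff hT (P (v i)) (hP (v i)) s(a,b)
        have h3 := tree_mem_edges_iff hT (P (v j)) (hP (v j)) s(a,b)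
        have r1 := tree_reach_iff hT hab (v i) (v j)
        have r2 := tree_reach_iff hT hab r (v i)
        have r3 := tree_reach_iff hT hab r (v j)
        rw [h1, h2, h3, r1, r2, r3]
        tauto
      · have w1 : e ∉ q.edges := fun hc => hset (q.edges_subset_edgeSet hc)
        have w2 : e ∉ (P (v i)).edges := fun hc => hset ((P (v i)).edges_subset_edgeSet hc)
        have w3 : e ∉ (P (v j)).edges := fun hc => hset ((P (v j)).edges_subset_edgeSet hc)
        tauto
    have hsub : symmDiff (E (v i)) (E (v j)) ⊆ U := by
      intro e he
      rw [Finset.mem_symmDiff] at he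
      rcases he with ⟨h1, _⟩ | ⟨h1, _⟩
      · exact Finset.mem_biUnion.mpr ⟨i, Finset.mem_univ _, h1⟩
      · exact Finset.mem_biUnion.mpr ⟨j, Finset.mem_univ _, h1⟩
    have hpt : ∀ e : Sym2 V, (g (v i) e - g (v j) e)^2 =
        if e ∈ symmDiff (E (v i)) (E (v j)) then (1:ℝ) else 0 := by
      intro e
      by_cases h1 : e ∈ E (v i) <;> by_cases h2 : e ∈ E (v j) <;>
        simp [hg, h1, h2, Finset.mem_symmDiff]
    have hsum : ∑ e ∈ U, (g (v i) e - g (v j) e)^2 = ((symmDiff (E (v i)) (E (v j))).card : ℝ) := by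
      rw [Finset.sum_congr rfl fun e _ => hpt e, Finset.sum_ite_mem,
        Finset.inter_eq_right.mpr hsub, Finset.sum_const, nsmul_eq_mul, mul_one]
    rw [hsum, ← hsd]
    have hnodup := hq.isTrail.edges_nodup
    rw [List.toFinset_card_of_nodup hnodup, q.length_edges, hqlen]
  have key : ∀ (a : Fin n → ℝ), ∑ i, ∑ j, lam i * lam j * (a i - a j)^2 ≤ 0 := by
    intro a
    have expand : ∀ i j : Fin n, lam i * lam j * (a i - a j)^2 =
        ((lam i * (a i)^2) * lam j + lam i * (lam j * (a j)^2)) -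
          (2 * (lam i * a i)) * (lam j * a j) := by
      intros; ring
    have t1 : ∑ i : Fin n, ∑ j : Fin n, (lam i * (a i)^2) * lam j = 0 := by
      simp_rw [← Finset.mul_sum, h, mul_zero, Finset.sum_const_zero]
    have t2 : ∑ i : Fin n, ∑ j : Fin n, lam i * (lam j * (a j)^2) = 0 := by
      simp_rw [← Finset.mul_sum, ← Finset.sum_mul, h, zero_mul]
    have t3 : ∑ i : Fin n, ∑ j : Fin n, (2 * (lam i * a i)) * (lam j * a j) =
        2 * (∑ i, lam i * a i)^2 := by
      simp_rw [← Finset.mul_sum, ← Finset.sum_mul, ← Finset.mul_sum]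
      ring
    calc ∑ i, ∑ j, lam i * lam j * (a i - a j)^2
        = ∑ i : Fin n, ∑ j : Fin n, (((lam i * (a i)^2) * lam j + lam i * (lam j * (a j)^2)) -
            (2 * (lam i * a i)) * (lam j * a j)) := by simp_rw [expand]
      _ = (∑ i : Fin n, ∑ j : Fin n, ((lam i * (a i)^2) * lam j + lam i * (lam j * (a j)^2))) -
            ∑ i : Fin n, ∑ j : Fin n, (2 * (lam i * a i)) * (lam j * a j) := by
          simp_rw [Finset.sum_sub_distrib]
      _ = ((∑ i : Fin n, ∑ j : Fin n, (lam i * (a i)^2) * lam j) +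
            ∑ i : Fin n, ∑ j : Fin n, lam i * (lam j * (a j)^2)) -
            ∑ i : Fin n, ∑ j : Fin n, (2 * (lam i * a i)) * (lam j * a j) := by
          simp_rw [Finset.sum_add_distrib]
      _ = -(2 * (∑ i, lam i * a i)^2) := by rw [t1, t2, t3]; ring
      _ ≤ 0 := by nlinarith [sq_nonneg (∑ i, lam i * a i)]
  calc ∑ i, ∑ j, lam i * lam j * (T.dist (v i) (v j) : ℝ)
      = ∑ i, ∑ j, ∑ e ∈ U, lam i * lam j * (g (v i) e - g (v j) e)^2 := by
        refine Finset.sum_congr rfl fun i _ => Finset.sum_congr rfl fun j _ => ?_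
        rw [hdist i j, Finset.mul_sum]
    _ = ∑ i, ∑ e ∈ U, ∑ j, lam i * lam j * (g (v i) e - g (v j) e)^2 :=
        Finset.sum_congr rfl fun i _ => Finset.sum_comm
    _ = ∑ e ∈ U, ∑ i, ∑ j, lam i * lam j * (g (v i) e - g (v j) e)^2 := Finset.sum_comm
    _ ≤ 0 := Finset.sum_nonpos fun e _ => key (fun i => g (v i) e)
end

section
/- Let Γ be a countable group with the Haagerup property acting on a standard probability space (X,μ) preserving the measure class of μ, and let G = X ⋊ Γ be the semidirect product groupoid. If (f_n) are normalized positive definite functions on Γ vanishing at infinity with f_n → 1 pointwise, then F_n(x,g) := f_n(g) defines positive definite functions on G with F_n = 1 on units, ν({|F_n| > ε}) < ∞ for all ε > 0, and F_n → 1 a.e. Hence (G,μ) has the Haagerup property. -/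
open MeasureTheory ENNReal Filter Topology
open scoped ComplexOrder

/-- The semidirect product groupoid `X ⋊ Γ` of a group action, with `r(x,g) = x`,
`s(x,g) = g⁻¹ • x` and `(x,g)(g⁻¹ • x, h) = (x, gh)`. -/
def actionGroupoid (X : Type) (Γ : Type) [Group Γ] [MulAction Γ X] [Countable Γ] :
    CountableGroupoid where
  E := X × Γ
  X := X
  r p := p.1
  s p := p.2⁻¹ • p.1
  unit x := (x, 1)
  mul p q := (p.1, p.2 * q.2)
  inv p := (p.2⁻¹ • p.1, p.2⁻¹)
  r_unit x := rfl
  s_unit x := by simp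
  mul_assoc' a b c _ _ := by simp [mul_assoc]
  r_mul a b _ := rfl
  s_mul a b h := by
    show (a.2 * b.2)⁻¹ • a.1 = b.2⁻¹ • b.1
    change a.2⁻¹ • a.1 = b.1 at h
    rw [mul_inv_rev, mul_smul]
    exact congrArg _ h
  unit_mul a := by simp
  mul_unit a := by simp
  r_inv a := rfl
  s_inv a := by simp
  mul_inv a := by simp
  inv_mul a := by simp
  countable_fibers x := by
    apply Set.Countable.mono _ (Set.countable_range fun g : Γ => ((g • x, g) : X × Γ))
    rintro ⟨y, g⟩ h
    refine ⟨g, Prod.ext ?_ rfl⟩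
    show g • x = y
    rw [← h]
    simp

/-- if a countable group `Γ` with the Haagerup property (witnessed by
normalized positive definite functions `f_n` vanishing at infinity with `f_n → 1`)
acts on `(X,μ)` preserving the measure class, then `F_n(x,g) := f_n(g)` witnesses the
Haagerup property for the semidirect product groupoid `X ⋊ Γ`. -/
theorem semidirect_haagerup (X : Type) [MeasurableSpace X] (μ : Measure X)
    [IsProbabilityMeasure μ] (Γ : Type) [Group Γ] [Countable Γ] [MulAction Γ X]
    (hqi : ∀ g : Γ, (μ.map fun x => g • x) ≪ μ ∧ μ ≪ (μ.map fun x => g • x))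
    (f : ℕ → Γ → ℂ)
    (hpd : ∀ (n : ℕ) (m : ℕ) (g : Fin m → Γ) (lam : Fin m → ℂ),
      0 ≤ ∑ i, ∑ j, lam i * (starRingEnd ℂ) (lam j) * f n ((g i)⁻¹ * g j))
    (hone : ∀ n, f n 1 = 1)
    (hvanish : ∀ (n : ℕ) (ε : ℝ), 0 < ε → {g : Γ | ε < ‖f n g‖}.Finite)
    (hlim : ∀ g : Γ, Tendsto (fun n => f n g) atTop (nhds 1)) :
    (∀ n, (actionGroupoid X Γ).IsPosDef fun p : X × Γ => f n p.2) ∧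
    (∀ (n : ℕ) (x : X), f n ((x, (1 : Γ)) : X × Γ).2 = 1) ∧
    (∀ (n : ℕ) (ε : ℝ), 0 < ε →
      @CountableGroupoid.nuSet (actionGroupoid X Γ) (inferInstanceAs (MeasurableSpace X))
        μ {p : X × Γ | ε < ‖f n p.2‖} < ⊤) ∧
    (@CountableGroupoid.nuSet (actionGroupoid X Γ) (inferInstanceAs (MeasurableSpace X)) μ
      {p : X × Γ | ¬ Tendsto (fun n => f n p.2) atTop (nhds (1 : ℂ))} = 0) ∧
    @CountableGroupoid.HaagerupProperty (actionGroupoid X Γ)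
      (inferInstanceAs (MeasurableSpace X)) μ := by

  classical
  have hposdef : ∀ n, (actionGroupoid X Γ).IsPosDef fun p : X × Γ => f n p.2 := by
    intro n x m γ hr lam
    exact hpd n m (fun i => (γ i).2) lam
  have hnu : ∀ (n : ℕ) (ε : ℝ), 0 < ε →
      @CountableGroupoid.nuSet (actionGroupoid X Γ) (inferInstanceAs (MeasurableSpace X))
        μ {p : X × Γ | ε < ‖f n p.2‖} < ⊤ := by
    intro n ε hε
    have hfin := hvanish n ε hε
    unfold CountableGroupoid.nuSet
    have key : ∀ x : X,
        (∑' _γ : ↥({p : X × Γ | ε < ‖f n p.2‖} ∩ {γ : X × Γ | (actionGroupoid X Γ).s γ = x}),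
          (1 : ℝ≥0∞)) ≤ (hfin.toFinset.card : ℝ≥0∞) := by
      intro x
      set S := {p : X × Γ | ε < ‖f n p.2‖} ∩ {γ : X × Γ | (actionGroupoid X Γ).s γ = x}
      have hinj : Function.Injective
          (fun γ : S => (⟨γ.1.2, hfin.mem_toFinset.2 γ.2.1⟩ : hfin.toFinset)) := by
        rintro ⟨⟨y₁, g₁⟩, h₁⟩ ⟨⟨y₂, g₂⟩, h₂⟩ h
        have hg : g₁ = g₂ := congrArg Subtype.val h
        have hy₁ : g₁⁻¹ • y₁ = x := h₁.2
        have hy₂ : g₂⁻¹ • y₂ = x := h₂.2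
        have : y₁ = y₂ := by
          have := hy₁.trans hy₂.symm
          rw [hg] at this
          simpa using congrArg (fun z => g₂ • z) this
        simp [this, hg]
      calc (∑' _γ : S, (1 : ℝ≥0∞))
          ≤ ∑' _g : hfin.toFinset, (1 : ℝ≥0∞) :=
            ENNReal.tsum_comp_le_tsum_of_injective hinj (fun _ => 1)
        _ = (hfin.toFinset.card : ℝ≥0∞) := by
            rw [tsum_fintype]
            simp
    calc (∫⁻ x, (∑' _γ : ↥({p : X × Γ | ε < ‖f n p.2‖} ∩
            {γ : X × Γ | (actionGroupoid X Γ).s γ = x}), (1 : ℝ≥0∞)) ∂μ)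
        ≤ ∫⁻ _x, (hfin.toFinset.card : ℝ≥0∞) ∂μ := lintegral_mono key
      _ = (hfin.toFinset.card : ℝ≥0∞) * μ Set.univ := lintegral_const _
      _ < ⊤ := by
          rw [measure_univ, mul_one]
          exact ENNReal.natCast_lt_top _
  have hempty : {p : X × Γ | ¬ Tendsto (fun n => f n p.2) atTop (nhds (1 : ℂ))} = ∅ := by
    ext p
    simp [hlim p.2]
  have hzero : @CountableGroupoid.nuSet (actionGroupoid X Γ)
      (inferInstanceAs (MeasurableSpace X)) μ
      {p : X × Γ | ¬ Tendsto (fun n => f n p.2) atTop (nhds (1 : ℂ))} = 0 := by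
    unfold CountableGroupoid.nuSet
    refine (lintegral_congr fun x => ?_).trans lintegral_zero
    exact ENNReal.tsum_eq_zero.2 fun γ => (γ.2.1 (hlim γ.1.2)).elim
  refine ⟨hposdef, fun n x => hone n, hnu, hzero, ?_⟩
  exact ⟨fun n p => f n p.2, hposdef,
    fun n => Filter.Eventually.of_forall (fun x => hone n), hnu, hzero⟩
end
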